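/- Let G be a finite abelian group, let φ : 𝒢̃ → 𝒢 be a G-cover of graphs, and let γ be a closed walk on 𝒢. Then for every integer j ≥ 0, the subsets NV_φ(γ) and NV_φ(γ^{(j)}) of G are equal. -/

import Mathlib

/-- A finite graph: each edge `e` has an initial vertex `init e` and a terminal
vertex `term e` (forming its plus direction `e⁺`; the minus direction is reversed). -/
structure FGraph where
  V : Type
  E : Type
  finV : Finite V
  finE : Finite E
  init : E → V
  term : E → V

namespace FGraph

/-- Initial vertex of a directed edge; `true` is the plus direction. -/
def dsrc (Γ : FGraph) (e : Γ.E) (s : Bool) : Γ.V := if s then Γ.init e else Γ.term e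

/-- Terminal vertex of a directed edge. -/
def ddst (Γ : FGraph) (e : Γ.E) (s : Bool) : Γ.V := if s then Γ.term e else Γ.init e

/-- `Γ.WalkFrom v ℓ w` : the list of directed edges `ℓ` is a walk from `v` to `w`. -/
def WalkFrom (Γ : FGraph) : Γ.V → List (Γ.E × Bool) → Γ.V → Prop
  | v, [], w => v = w
  | v, p :: rest, w => Γ.dsrc p.1 p.2 = v ∧ Γ.WalkFrom (Γ.ddst p.1 p.2) rest w

/-- The list of vertices `v₀, …, v_n` visited by a walk with edge list `ℓ` starting at `v`. -/
def vertList (Γ : FGraph) : Γ.V → List (Γ.E × Bool) → List Γ.V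
  | v, [] => [v]
  | v, p :: rest => v :: Γ.vertList (Γ.ddst p.1 p.2) rest

end FGraph

/-- A map of graphs: the endpoint set of the image of an edge is the image of its
endpoint set. -/
structure GraphMap (Γ₁ Γ₂ : FGraph) where
  mapV : Γ₁.V → Γ₂.V
  mapE : Γ₁.E → Γ₂.E
  endpoints : ∀ e : Γ₁.E,
    ({Γ₂.init (mapE e), Γ₂.term (mapE e)} : Set Γ₂.V) = mapV '' {Γ₁.init e, Γ₁.term e}

/-- An isomorphism of graphs. -/
structure GraphIso (Γ₁ Γ₂ : FGraph) extends GraphMap Γ₁ Γ₂ where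
  bijV : Function.Bijective mapV
  bijE : Function.Bijective mapE

/-- A `G`-cover of graphs `φ : T → B`: `G` acts on `T` (compatibly with endpoints,
preserving the chosen directions), `φ` is `G`-invariant and direction-preserving,
identifies `T/G` with `B` (it is surjective and `G` is transitive on all fibers),
and `G` acts freely on the edges of `T` as soon as `B` has an edge. -/
structure GCover (G : Type) [Group G] (T B : FGraph) where
  mapV : T.V → B.V
  mapE : T.E → B.E
  actV : G → T.V → T.V
  actE : G → T.E → T.E
  actV_one : ∀ v, actV 1 v = v
  actV_mul : ∀ g h v, actV (g * h) v = actV g (actV h v)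
  actE_one : ∀ e, actE 1 e = e
  actE_mul : ∀ g h e, actE (g * h) e = actE g (actE h e)
  act_init : ∀ g e, T.init (actE g e) = actV g (T.init e)
  act_term : ∀ g e, T.term (actE g e) = actV g (T.term e)
  map_init : ∀ e, B.init (mapE e) = mapV (T.init e)
  map_term : ∀ e, B.term (mapE e) = mapV (T.term e)
  map_actV : ∀ g v, mapV (actV g v) = mapV v
  map_actE : ∀ g e, mapE (actE g e) = mapE e
  surjV : Function.Surjective mapV
  surjE : Function.Surjective mapE
  transV : ∀ v w, mapV v = mapV w → ∃ g, actV g v = w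
  transE : ∀ e f, mapE e = mapE f → ∃ g, actE g e = f
  freeE : Nonempty B.E → ∀ g e, actE g e = e → g = 1

namespace GCover

variable {G : Type} [Group G] {T B : FGraph}

/-- The net voltage set `NV_φ(γ, w₀)` of a closed walk with edge list `ℓ` at a
base vertex `w₀` of the cover: the set of `g ∈ G` such that some lift of the walk
starting at `w₀` ends at `g·w₀`. -/
def NVset (φ : GCover G T B) (ℓ : List (B.E × Bool)) (w₀ : T.V) : Set G :=
  {g | ∃ ℓ' : List (T.E × Bool),
    ℓ'.map (fun p => (φ.mapE p.1, p.2)) = ℓ ∧ T.WalkFrom w₀ ℓ' (φ.actV g w₀)}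

/-- The net voltage class `NV_φ(γ)` of a closed walk `γ = (v₀, ℓ)`: the conjugacy
class in `G` of `NV_φ(γ, w₀)` for (any) `w₀` in the fiber over `v₀`. -/
def NVclass (φ : GCover G T B) (v₀ : B.V) (ℓ : List (B.E × Bool)) : Set (Set G) :=
  {S | ∃ w₀ : T.V, φ.mapV w₀ = v₀ ∧
    ∃ g : G, S = (fun h => g * h * g⁻¹) '' φ.NVset ℓ w₀}

end GCover

/-- A `(θ, τ)`-equivalence between two `G`-covers. -/
structure GCoverEquiv {G : Type} [Group G] {T₁ B₁ T₂ B₂ : FGraph}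
    (φ₁ : GCover G T₁ B₁) (φ₂ : GCover G T₂ B₂)
    (θ : GraphIso B₁ B₂) (τ : G ≃* G) where
  iso : GraphIso T₁ T₂
  commV : ∀ v, φ₂.mapV (iso.mapV v) = θ.mapV (φ₁.mapV v)
  commE : ∀ e, φ₂.mapE (iso.mapE e) = θ.mapE (φ₁.mapE e)
  equivV : ∀ (g : G) v, iso.mapV (φ₁.actV g v) = φ₂.actV (τ g) (iso.mapV v)
  equivE : ∀ (g : G) e, iso.mapE (φ₁.actE g e) = φ₂.actE (τ g) (iso.mapE e)

section Aux

variable {G : Type} [Group G] {T B : FGraph}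

lemma walkFrom_append {Γ : FGraph} :
    ∀ (a : List (Γ.E × Bool)) {b : List (Γ.E × Bool)} {v w : Γ.V},
      Γ.WalkFrom v (a ++ b) w ↔ ∃ u, Γ.WalkFrom v a u ∧ Γ.WalkFrom u b w := by
  intro a
  induction a with
  | nil =>
    intro b v w
    constructor
    · intro h; exact ⟨v, rfl, h⟩
    · rintro ⟨u, rfl, h⟩; exact h
  | cons p rest ih =>
    intro b v w
    constructor
    · rintro ⟨h1, h2⟩
      obtain ⟨u, hu1, hu2⟩ := (ih).mp h2
      exact ⟨u, ⟨h1, hu1⟩, hu2⟩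
    · rintro ⟨u, ⟨h1, h2⟩, h3⟩
      exact ⟨h1, (ih).mpr ⟨u, h2, h3⟩⟩

lemma walkFrom_unique {Γ : FGraph} :
    ∀ (a : List (Γ.E × Bool)) {v u u' : Γ.V},
      Γ.WalkFrom v a u → Γ.WalkFrom v a u' → u = u' := by
  intro a
  induction a with
  | nil => intro v u u' h1 h2; exact h1.symm.trans h2
  | cons p rest ih => intro v u u' h1 h2; exact ih h1.2 h2.2

lemma map_dsrc (φ : GCover G T B) (e : T.E) (s : Bool) :
    φ.mapV (T.dsrc e s) = B.dsrc (φ.mapE e) s := by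
  cases s <;> simp [FGraph.dsrc, φ.map_init, φ.map_term]

lemma map_ddst (φ : GCover G T B) (e : T.E) (s : Bool) :
    φ.mapV (T.ddst e s) = B.ddst (φ.mapE e) s := by
  cases s <;> simp [FGraph.ddst, φ.map_init, φ.map_term]

lemma act_dsrc (φ : GCover G T B) (g : G) (e : T.E) (s : Bool) :
    T.dsrc (φ.actE g e) s = φ.actV g (T.dsrc e s) := by
  cases s <;> simp [FGraph.dsrc, φ.act_init, φ.act_term]

lemma act_ddst (φ : GCover G T B) (g : G) (e : T.E) (s : Bool) :
    T.ddst (φ.actE g e) s = φ.actV g (T.ddst e s) := by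
  cases s <;> simp [FGraph.ddst, φ.act_init, φ.act_term]

lemma proj_walk (φ : GCover G T B) :
    ∀ (ℓ' : List (T.E × Bool)) {w u : T.V}, T.WalkFrom w ℓ' u →
      B.WalkFrom (φ.mapV w) (ℓ'.map (fun p => (φ.mapE p.1, p.2))) (φ.mapV u) := by
  intro ℓ'
  induction ℓ' with
  | nil => intro w u h; exact congrArg φ.mapV h
  | cons p rest ih =>
    rintro w u ⟨h1, h2⟩
    refine ⟨?_, ?_⟩
    · simpa [map_dsrc] using congrArg φ.mapV h1
    · simpa [map_ddst] using ih h2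

lemma act_walk (φ : GCover G T B) (g : G) :
    ∀ (ℓ' : List (T.E × Bool)) {w u : T.V}, T.WalkFrom w ℓ' u →
      T.WalkFrom (φ.actV g w) (ℓ'.map (fun p => (φ.actE g p.1, p.2))) (φ.actV g u) := by
  intro ℓ'
  induction ℓ' with
  | nil => intro w u h; exact congrArg (φ.actV g) h
  | cons p rest ih =>
    rintro w u ⟨h1, h2⟩
    refine ⟨?_, ?_⟩
    · simpa [act_dsrc] using congrArg (φ.actV g) h1
    · simpa [act_ddst] using ih h2

lemma proj_act (φ : GCover G T B) (g : G) (ℓ' : List (T.E × Bool)) :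
    (ℓ'.map (fun p => (φ.actE g p.1, p.2))).map (fun p => (φ.mapE p.1, p.2))
      = ℓ'.map (fun p => (φ.mapE p.1, p.2)) := by
  simp [List.map_map, Function.comp, φ.map_actE]

lemma lift_exists (φ : GCover G T B) :
    ∀ (ℓ : List (B.E × Bool)) {v u : B.V}, B.WalkFrom v ℓ u →
      ∀ w : T.V, φ.mapV w = v →
      ∃ (ℓ' : List (T.E × Bool)) (u' : T.V),
        ℓ'.map (fun p => (φ.mapE p.1, p.2)) = ℓ ∧ T.WalkFrom w ℓ' u' ∧ φ.mapV u' = u := by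
  intro ℓ
  induction ℓ with
  | nil =>
    intro v u h w hw
    exact ⟨[], w, rfl, rfl, hw.trans h⟩
  | cons p rest ih =>
    rintro v u ⟨h1, h2⟩ w hw
    obtain ⟨f, hf⟩ := φ.surjE p.1
    have hsrc : φ.mapV (T.dsrc f p.2) = φ.mapV w := by
      rw [map_dsrc, hf, h1, hw]
    obtain ⟨g, hg⟩ := φ.transV _ _ hsrc
    set e := φ.actE g f with he
    have hmape : φ.mapE e = p.1 := by rw [he, φ.map_actE, hf]
    have hsrc' : T.dsrc e p.2 = w := by rw [he, act_dsrc, hg]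
    have hdst : φ.mapV (T.ddst e p.2) = B.ddst p.1 p.2 := by
      rw [map_ddst, hmape]
    obtain ⟨ℓ', u', hm, hwalk, hu⟩ := ih h2 (T.ddst e p.2) hdst
    exact ⟨(e, p.2) :: ℓ', u', by simp [hmape, hm], ⟨hsrc', hwalk⟩, hu⟩

variable {G : Type} [CommGroup G]

lemma NVset_act (φ : GCover G T B) (ℓ : List (B.E × Bool)) (w : T.V) (h : G) :
    φ.NVset ℓ w ⊆ φ.NVset ℓ (φ.actV h w) := by
  rintro g ⟨ℓ', hm, hwalk⟩
  refine ⟨ℓ'.map (fun p => (φ.actE h p.1, p.2)), by rw [proj_act, hm], ?_⟩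
  have := act_walk φ h ℓ' hwalk
  have hcomm : φ.actV h (φ.actV g w) = φ.actV g (φ.actV h w) := by
    rw [← φ.actV_mul, ← φ.actV_mul, mul_comm]
  rwa [hcomm] at this

lemma NVset_fiber (φ : GCover G T B) (ℓ : List (B.E × Bool)) {w w' : T.V}
    (h : φ.mapV w = φ.mapV w') : φ.NVset ℓ w = φ.NVset ℓ w' := by
  obtain ⟨g, hg⟩ := φ.transV w w' h
  apply Set.Subset.antisymm
  · rw [← hg]; exact NVset_act φ ℓ w g
  · have := NVset_act φ ℓ w' g⁻¹
    rw [← hg, ← φ.actV_mul, inv_mul_cancel, φ.actV_one] at this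
    rw [← hg]
    exact this

lemma NVset_shift_subset (φ : GCover G T B) {a b : List (B.E × Bool)}
    {v₀ vj : B.V} (ha : B.WalkFrom v₀ a vj) (hb : B.WalkFrom vj b v₀)
    {w₀ wj : T.V} (hw₀ : φ.mapV w₀ = v₀) (hwj : φ.mapV wj = vj) :
    φ.NVset (a ++ b) w₀ ⊆ φ.NVset (b ++ a) wj := by
  rintro g ⟨ℓ', hm, hwalk⟩
  set ℓ₁ := ℓ'.take a.length with hℓ₁
  set ℓ₂ := ℓ'.drop a.length with hℓ₂
  have hm1 : ℓ₁.map (fun p => (φ.mapE p.1, p.2)) = a := by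
    rw [hℓ₁, List.map_take, hm, List.take_left]
  have hm2 : ℓ₂.map (fun p => (φ.mapE p.1, p.2)) = b := by
    rw [hℓ₂, List.map_drop, hm, List.drop_left]
  have hsplit' : T.WalkFrom w₀ (ℓ₁ ++ ℓ₂) (φ.actV g w₀) := by
    rwa [hℓ₁, hℓ₂, List.take_append_drop]
  obtain ⟨u, hu1, hu2⟩ := (walkFrom_append ℓ₁).mp hsplit'
  have hproj : B.WalkFrom v₀ a (φ.mapV u) := by
    have := proj_walk φ ℓ₁ hu1
    rwa [hm1, hw₀] at this
  have humap : φ.mapV u = vj := (walkFrom_unique a hproj ha)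
  have hact : T.WalkFrom (φ.actV g w₀) (ℓ₁.map (fun p => (φ.actE g p.1, p.2)))
      (φ.actV g u) := act_walk φ g ℓ₁ hu1
  have hwalk2 : T.WalkFrom u (ℓ₂ ++ ℓ₁.map (fun p => (φ.actE g p.1, p.2)))
      (φ.actV g u) := (walkFrom_append ℓ₂).mpr ⟨φ.actV g w₀, hu2, hact⟩
  have hg : g ∈ φ.NVset (b ++ a) u := by
    refine ⟨ℓ₂ ++ ℓ₁.map (fun p => (φ.actE g p.1, p.2)), ?_, hwalk2⟩
    rw [List.map_append, hm2, proj_act, hm1]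
  rwa [NVset_fiber φ (b ++ a) (humap.trans hwj.symm)] at hg

end Aux

/-- **Lemma 2.13.** Let `G` be a finite abelian group, `φ` a `G`-cover, and `γ` a
closed walk with initial vertex `v₀` and (nonempty) edge list `ℓ` of length `n`.
For `j ≥ 0`, the shifted walk `γ^{(j)}` starts at the vertex `v_{j̄}` (`j̄ = j mod n`)
and has edge list `ℓ.drop j̄ ++ ℓ.take j̄`. Then `NV_φ(γ) = NV_φ(γ^{(j)})` as subsets
of `G` (for abelian `G` the net voltage set does not depend on the base vertex of
the fiber, so it is a well-defined subset of `G`). -/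
theorem net_voltage_shift {G : Type} [CommGroup G] [Finite G] {T B : FGraph}
    (φ : GCover G T B) (v₀ : B.V) (ℓ : List (B.E × Bool)) (hne : ℓ ≠ [])
    (hclosed : B.WalkFrom v₀ ℓ v₀) (j : ℕ) (vj : B.V)
    (hsplit : B.WalkFrom v₀ (ℓ.take (j % ℓ.length)) vj)
    (w₀ wj : T.V) (hw₀ : φ.mapV w₀ = v₀) (hwj : φ.mapV wj = vj) :
    φ.NVset ℓ w₀ = φ.NVset (ℓ.drop (j % ℓ.length) ++ ℓ.take (j % ℓ.length)) wj := by
  set k := j % ℓ.length with hk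
  set a := ℓ.take k with ha
  set b := ℓ.drop k with hb
  have hab : ℓ = a ++ b := (List.take_append_drop k ℓ).symm
  have hclosed' : B.WalkFrom v₀ (a ++ b) v₀ := hab ▸ hclosed
  obtain ⟨u, hu1, hu2⟩ := (walkFrom_append a).mp hclosed'
  have huv : u = vj := walkFrom_unique a hu1 hsplit
  subst huv
  apply Set.Subset.antisymm
  · rw [hab]
    exact NVset_shift_subset φ hsplit hu2 hw₀ hwj
  · rw [hab]
    exact NVset_shift_subset φ hu2 hsplit hwj hw₀
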